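/- arXiv:math/0506600 — 7 statements merged into one kernel-verified Lean document; each statement's English description precedes it below -/
import Mathlib

section
/- Insertion in L₁ satisfies the second associativity law: for all X, Y, Z ∈ L₁ and natural numbers n, m with 1 ≤ n ≤ |X| and n+|Y| ≤ m ≤ |X|+|Y|−1, one has (X◁ₙY)◁ₘZ = (X◁_{m−|Y|+1}Z)◁ₙY. -/
/-- Binary trees: the set `L₁` generated by `□` and `∧`. -/
inductive L1 : Type
  | box : L1
  | wedge : L1 → L1 → L1
  deriving DecidableEq

namespace L1

/-- `|X|`: the number of occurrences of `□` in `X`. -/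
def leaves : L1 → ℕ
  | box => 1
  | wedge X Y => X.leaves + Y.leaves

/-- Insertion `X ◁ₙ Z` in `L₁` (total extension of the partial operation;
on its domain `1 ≤ n ≤ |X|` it agrees with the defining clauses). -/
def ins : L1 → ℕ → L1 → L1
  | box, _, Z => Z
  | wedge X Y, n, Z =>
      if n ≤ X.leaves then wedge (X.ins n Z) Y else wedge X (Y.ins (n - X.leaves) Z)

end L1

namespace L1

theorem leaves_pos (X : L1) : 1 ≤ X.leaves := by
  induction X with
  | box => simp [leaves]
  | wedge A B ihA ihB => simp [leaves]; omega

theorem leaves_ins (X Z : L1) (n : ℕ) (h1 : 1 ≤ n) (h2 : n ≤ X.leaves) :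
    (X.ins n Z).leaves = X.leaves + Z.leaves - 1 := by
  induction X generalizing n with
  | box => simp [leaves, ins]
  | wedge A B ihA ihB =>
    simp only [leaves, ins] at *
    by_cases h : n ≤ A.leaves
    · rw [if_pos h]
      have := A.leaves_pos
      have := Z.leaves_pos
      simp only [leaves, ihA n h1 h]
      omega
    · rw [if_neg h]
      have := A.leaves_pos
      have := B.leaves_pos
      have := Z.leaves_pos
      simp only [leaves, ihB (n - A.leaves) (by omega) (by omega)]
      omega

end L1

theorem insertion_assoc2 (X Y Z : L1) (n m : ℕ)
    (h1 : 1 ≤ n) (h2 : n ≤ X.leaves) (h3 : n + Y.leaves ≤ m)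
    (h4 : m ≤ X.leaves + Y.leaves - 1) :
    (X.ins n Y).ins m Z = (X.ins (m - Y.leaves + 1) Z).ins n Y := by
  have hY := Y.leaves_pos
  have hZ := Z.leaves_pos
  induction X generalizing n m with
  | box => simp [L1.leaves] at h2 h4; omega
  | wedge A B ihA ihB =>
    have hA := A.leaves_pos
    have hB := B.leaves_pos
    simp only [L1.leaves] at h2 h4
    by_cases h : n ≤ A.leaves
    · have hk : m - Y.leaves + 1 ≤ A.leaves + B.leaves := by omega
      simp only [L1.ins, if_pos h]
      rw [L1.leaves_ins A Y n h1 h]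
      by_cases h5 : m ≤ A.leaves + Y.leaves - 1
      · have hk2 : m - Y.leaves + 1 ≤ A.leaves := by omega
        rw [if_pos h5, if_pos hk2]
        have hn : n ≤ (A.ins (m - Y.leaves + 1) Z).leaves := by
          rw [L1.leaves_ins A Z _ (by omega) hk2]; omega
        simp only [L1.ins, if_pos hn]
        rw [ihA n m h1 h h3 h5]
      · have hk2 : ¬ (m - Y.leaves + 1 ≤ A.leaves) := by omega
        rw [if_neg h5, if_neg hk2]
        simp only [L1.ins, if_pos h]
        have heq2 : m - (A.leaves + Y.leaves - 1) = m - Y.leaves + 1 - A.leaves := by omega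
        rw [heq2]
    · have h' : ¬ (m - Y.leaves + 1 ≤ A.leaves) := by omega
      have hm : ¬ (m ≤ A.leaves) := by omega
      simp only [L1.ins, if_neg h, if_neg h', if_neg hm]
      congr 1
      have := ihB (n - A.leaves) (m - A.leaves) (by omega) (by omega) (by omega) (by omega)
      have heq : m - A.leaves - Y.leaves + 1 = m - Y.leaves + 1 - A.leaves := by omega
      rw [heq] at this
      exact this
end

section
/- (Soundness for I'') If A = B is provable in the equational calculus I'', then v(A) = v(B) in L₁. -/
/-- Raw terms over the generator `2` and the insertion operations `◁ₙ`. -/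
inductive T2 : Type
  | two : T2
  | ins : T2 → ℕ → T2 → T2
  deriving DecidableEq

namespace T2

/-- `|A|` for terms: `|2| = 2` and `|A ◁ₙ B| = |A| + |B| - 1`. -/
def size : T2 → ℕ
  | two => 2
  | ins A _ B => A.size + B.size - 1

/-- Membership in `L''`: each insertion `A ◁ₙ B` requires `1 ≤ n ≤ |A|`. -/
def WF : T2 → Prop
  | two => True
  | ins A n B => A.WF ∧ B.WF ∧ 1 ≤ n ∧ n ≤ A.size

/-- The interpretation `v : L'' → L₁`, with `v 2 = □∧□` and
`v (A ◁ₙ B) = v A ◁ₙ v B`. -/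
def val : T2 → L1
  | two => L1.wedge L1.box L1.box
  | ins A n B => A.val.ins n B.val

end T2

/-- The equational calculus `I''` on `L''`: the congruence (with respect to the
operations `◁ₙ`, on well-formed, i.e. defined, terms) generated by the axioms
(assoc 1) and (assoc 2). -/
inductive I2 : T2 → T2 → Prop
  | refl (A : T2) (h : A.WF) : I2 A A
  | symm {A B : T2} : I2 A B → I2 B A
  | trans {A B C : T2} : I2 A B → I2 B C → I2 A C
  | congr {A B C D : T2} {n : ℕ} : I2 A B → I2 C D →
      (T2.ins A n C).WF → (T2.ins B n D).WF →
      I2 (T2.ins A n C) (T2.ins B n D)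
  | assoc1 {A B C : T2} {n m : ℕ} :
      ((A.ins n B).ins m C).WF → n ≤ m → m < n + B.size →
      I2 ((A.ins n B).ins m C) (A.ins n (B.ins (m - n + 1) C))
  | assoc2 {A B C : T2} {n m : ℕ} :
      ((A.ins n B).ins m C).WF → n + B.size ≤ m →
      I2 ((A.ins n B).ins m C) ((A.ins (m - B.size + 1) C).ins n B)

namespace L1

theorem ins_assoc1 (X Y Z : L1) (n m : ℕ) (hn1 : 1 ≤ n) (hnX : n ≤ X.leaves)
    (hnm : n ≤ m) (hm : m < n + Y.leaves) :
    (X.ins n Y).ins m Z = X.ins n (Y.ins (m - n + 1) Z) := by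
  induction X generalizing n m with
  | box =>
    simp only [leaves] at hnX
    have hn : n = 1 := by omega
    subst hn
    have : m - 1 + 1 = m := by omega
    simp [ins, this]
  | wedge a b ha hb =>
    simp only [leaves] at hnX
    by_cases hc : n ≤ a.leaves
    · have hm' : m ≤ (a.ins n Y).leaves := by
        rw [leaves_ins a Y n hn1 hc]; have := leaves_pos Y; omega
      simp only [ins, if_pos hc, if_pos hm']
      rw [ha n m hn1 hc hnm hm]
    · have hma : ¬ m ≤ a.leaves := by omega
      simp only [ins, if_neg hc, if_neg hma]
      rw [hb (n - a.leaves) (m - a.leaves) (by omega) (by omega) (by omega) (by omega)]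
      have : m - a.leaves - (n - a.leaves) = m - n := by omega
      rw [this]

theorem ins_assoc2 (X Y Z : L1) (n m : ℕ) (hn1 : 1 ≤ n) (hnX : n ≤ X.leaves)
    (hm1 : n + Y.leaves ≤ m) (hm2 : m ≤ X.leaves + Y.leaves - 1) :
    (X.ins n Y).ins m Z = (X.ins (m - Y.leaves + 1) Z).ins n Y := by
  induction X generalizing n m with
  | box =>
    simp only [leaves] at hnX hm2
    have := leaves_pos Y; omega
  | wedge a b ha hb =>
    simp only [leaves] at hnX hm2
    have hY := leaves_pos Y
    have hZ := leaves_pos Z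
    have hb1 := leaves_pos b
    have ha1 := leaves_pos a
    by_cases hc : n ≤ a.leaves
    · by_cases hd : m ≤ a.leaves + Y.leaves - 1
      · have hm' : m ≤ (a.ins n Y).leaves := by rw [leaves_ins a Y n hn1 hc]; omega
        have hk : m - Y.leaves + 1 ≤ a.leaves := by omega
        have hn' : n ≤ (a.ins (m - Y.leaves + 1) Z).leaves := by
          rw [leaves_ins a Z _ (by omega) hk]; omega
        simp only [ins, if_pos hc, if_pos hm', if_pos hk, if_pos hn']
        rw [ha n m hn1 hc hm1 hd]
      · have hm' : ¬ m ≤ (a.ins n Y).leaves := by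
          rw [leaves_ins a Y n hn1 hc]; omega
        have hk : ¬ m - Y.leaves + 1 ≤ a.leaves := by omega
        simp only [ins, if_pos hc, if_neg hm', if_neg hk]
        have : m - (a.ins n Y).leaves = m - Y.leaves + 1 - a.leaves := by
          rw [leaves_ins a Y n hn1 hc]; omega
        rw [this]
    · have hk : ¬ m - Y.leaves + 1 ≤ a.leaves := by omega
      have hma : ¬ m ≤ a.leaves := by omega
      simp only [ins, if_neg hc, if_neg hma, if_neg hk]
      rw [hb (n - a.leaves) (m - a.leaves) (by omega) (by omega) (by omega) (by omega)]
      have : m - a.leaves - Y.leaves + 1 = m - Y.leaves + 1 - a.leaves := by omega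
      rw [this]

end L1

theorem T2.val_leaves : ∀ (A : T2), A.WF → A.val.leaves = A.size := by
  intro A hA
  induction A with
  | two => simp [T2.val, T2.size, L1.leaves]
  | ins A n B ihA ihB =>
    obtain ⟨hA', hB', hn1, hn2⟩ := hA
    simp only [T2.val, T2.size]
    rw [L1.leaves_ins _ _ n hn1 (by rw [ihA hA']; exact hn2), ihA hA', ihB hB']

theorem soundness_I2 {A B : T2} (h : I2 A B) : A.val = B.val := by
  induction h with
  | refl A h => rfl
  | symm _ ih => exact ih.symm
  | trans _ _ ih1 ih2 => exact ih1.trans ih2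
  | congr _ _ _ _ ih1 ih2 => simp only [T2.val, ih1, ih2]
  | @assoc1 A B C n m hWF hnm hm =>
    obtain ⟨⟨hA, hB, hn1, hn2⟩, hC, hm1, hm2⟩ := hWF
    show (A.val.ins n B.val).ins m C.val = A.val.ins n (B.val.ins (m - n + 1) C.val)
    exact L1.ins_assoc1 A.val B.val C.val n m hn1
      (by rw [T2.val_leaves A hA]; exact hn2) hnm
      (by rw [T2.val_leaves B hB]; exact hm)
  | @assoc2 A B C n m hWF hm =>
    obtain ⟨⟨hA, hB, hn1, hn2⟩, hC, hm1, hm2⟩ := hWF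
    show (A.val.ins n B.val).ins m C.val = (A.val.ins (m - B.size + 1) C.val).ins n B.val
    rw [← T2.val_leaves B hB]
    refine L1.ins_assoc2 A.val B.val C.val n m hn1
      (by rw [T2.val_leaves A hA]; exact hn2)
      (by rw [T2.val_leaves B hB]; exact hm) ?_
    rw [T2.val_leaves A hA, T2.val_leaves B hB]
    simpa [T2.size] using hm2
end

section
/- (Completeness for I'') For all A, B ∈ L'', if v(A) = v(B) in L₁, then A = B is provable in the equational calculus I''. -/
section Aux

theorem L1.leaves_pos_s4 (X : L1) : 1 ≤ X.leaves := by
  induction X with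
  | box => simp [L1.leaves]
  | wedge X Y ihX ihY => simp [L1.leaves]; omega

theorem L1.leaves_ins_s4 (X : L1) (n : ℕ) (Z : L1) (h : n ≤ X.leaves) :
    (X.ins n Z).leaves = X.leaves + Z.leaves - 1 := by
  induction X generalizing n with
  | box =>
    simp [L1.ins, L1.leaves]
  | wedge X Y ihX ihY =>
    simp only [L1.ins, L1.leaves] at *
    split
    · rw [L1.leaves, ihX _ (by assumption)]
      have := Z.leaves_pos_s4; have := Y.leaves_pos_s4; omega
    · rw [L1.leaves, ihY _ (by omega)]
      have := Z.leaves_pos_s4; have := X.leaves_pos_s4; omega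

theorem L1.ins_ne_box (X : L1) (n : ℕ) (Z : L1) (hX : X ≠ L1.box) :
    X.ins n Z ≠ L1.box := by
  cases X with
  | box => exact absurd rfl hX
  | wedge X Y => simp only [L1.ins]; split <;> simp

/-- Normal form terms: a canonical `T2` term for each tree (≠ □). -/
def nf : L1 → T2
  | .box => .two
  | .wedge .box .box => .two
  | .wedge .box (.wedge y1 y2) => .ins .two 2 (nf (.wedge y1 y2))
  | .wedge (.wedge x1 x2) .box => .ins .two 1 (nf (.wedge x1 x2))
  | .wedge (.wedge x1 x2) (.wedge y1 y2) =>
      .ins (.ins .two 2 (nf (.wedge y1 y2))) 1 (nf (.wedge x1 x2))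

theorem size_norm : ∀ X : L1, X ≠ L1.box → (nf X).size = X.leaves := by
  intro X
  induction X with
  | box => intro h; exact absurd rfl h
  | wedge X Y ihX ihY =>
    intro _
    cases X with
    | box =>
      cases Y with
      | box => simp [nf, T2.size, L1.leaves]
      | wedge y1 y2 =>
        have := ihY (by simp)
        have := (L1.wedge y1 y2).leaves_pos_s4
        simp [nf, T2.size, L1.leaves] at *; omega
    | wedge x1 x2 =>
      have hx := ihX (by simp)
      have := (L1.wedge x1 x2).leaves_pos_s4
      cases Y with
      | box => simp [nf, T2.size, L1.leaves] at *; omega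
      | wedge y1 y2 =>
        have := ihY (by simp)
        have := (L1.wedge y1 y2).leaves_pos_s4
        simp [nf, T2.size, L1.leaves] at *; omega

theorem WF_norm : ∀ X : L1, X ≠ L1.box → (nf X).WF := by
  intro X
  induction X with
  | box => intro h; exact absurd rfl h
  | wedge X Y ihX ihY =>
    intro _
    cases X with
    | box =>
      cases Y with
      | box => simp [nf, T2.WF]
      | wedge y1 y2 =>
        exact ⟨trivial, ihY (by simp), by omega, by simp [T2.size]⟩
    | wedge x1 x2 =>
      have hx := ihX (by simp)
      cases Y with
      | box =>
        exact ⟨trivial, hx, le_refl 1, by simp [T2.size]⟩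
      | wedge y1 y2 =>
        have hy := ihY (by simp)
        have hsy := size_norm (L1.wedge y1 y2) (by simp)
        have := (L1.wedge y1 y2).leaves_pos_s4
        exact ⟨⟨trivial, hy, by omega, by simp [T2.size]⟩, hx, le_refl 1,
          by simp only [T2.size]; omega⟩

theorem val_norm : ∀ X : L1, X ≠ L1.box → (nf X).val = X := by
  intro X
  induction X with
  | box => intro h; exact absurd rfl h
  | wedge X Y ihX ihY =>
    intro _
    cases X with
    | box =>
      cases Y with
      | box => simp [nf, T2.val, L1.ins]
      | wedge y1 y2 =>
        simp [nf, T2.val, L1.ins, L1.leaves, ihY (by simp)]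
    | wedge x1 x2 =>
      cases Y with
      | box =>
        simp [nf, T2.val, L1.ins, L1.leaves, ihX (by simp)]
      | wedge y1 y2 =>
        simp [nf, T2.val, L1.ins, L1.leaves, ihX (by simp), ihY (by simp)]

theorem val_shape : ∀ A : T2, ∃ a1 a2, A.val = L1.wedge a1 a2 := by
  intro A
  cases A with
  | two => exact ⟨_, _, rfl⟩
  | ins A n B =>
    obtain ⟨a1, a2, ha⟩ := val_shape A
    simp only [T2.val, ha, L1.ins]
    split <;> exact ⟨_, _, rfl⟩

theorem size_val : ∀ A : T2, A.WF → A.val.leaves = A.size := by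
  intro A
  induction A with
  | two => intro _; simp [T2.val, T2.size, L1.leaves]
  | ins A n B ihA ihB =>
    rintro ⟨hA, hB, h1, h2⟩
    simp only [T2.val, T2.size]
    rw [L1.leaves_ins_s4 _ _ _ (by rw [ihA hA]; exact h2), ihA hA, ihB hB]

end Aux

theorem L1.ins_box (n : ℕ) (Z : L1) : L1.box.ins n Z = Z := rfl

theorem L1.wedge_ins_le {X : L1} (Y : L1) {n : ℕ} (Z : L1) (h : n ≤ X.leaves) :
    (L1.wedge X Y).ins n Z = L1.wedge (X.ins n Z) Y := by
  simp only [L1.ins, if_pos h]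

theorem L1.wedge_ins_gt {X : L1} (Y : L1) {n : ℕ} (Z : L1) (h : X.leaves < n) :
    (L1.wedge X Y).ins n Z = L1.wedge X (Y.ins (n - X.leaves) Z) := by
  simp only [L1.ins]; rw [if_neg (by omega)]

theorem nf_bb : nf (L1.wedge L1.box L1.box) = T2.two := rfl
theorem nf_bw (y1 y2 : L1) :
    nf (L1.wedge L1.box (L1.wedge y1 y2)) = T2.two.ins 2 (nf (L1.wedge y1 y2)) := rfl
theorem nf_wb (x1 x2 : L1) :
    nf (L1.wedge (L1.wedge x1 x2) L1.box) = T2.two.ins 1 (nf (L1.wedge x1 x2)) := rfl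
theorem nf_ww (x1 x2 y1 y2 : L1) :
    nf (L1.wedge (L1.wedge x1 x2) (L1.wedge y1 y2)) =
      (T2.two.ins 2 (nf (L1.wedge y1 y2))).ins 1 (nf (L1.wedge x1 x2)) := rfl

theorem L1.ins_shape (X1 X2 : L1) (n : ℕ) (Z : L1) :
    ∃ w1 w2, (L1.wedge X1 X2).ins n Z = L1.wedge w1 w2 := by
  simp only [L1.ins]; split <;> exact ⟨_, _, rfl⟩

theorem key : ∀ (X : L1) (Z1 Z2 : L1) (n : ℕ), X ≠ L1.box → 1 ≤ n → n ≤ X.leaves →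
    I2 ((nf X).ins n (nf (L1.wedge Z1 Z2))) (nf (X.ins n (L1.wedge Z1 Z2))) := by
  intro X
  induction X with
  | box => intro _ _ _ h; exact absurd rfl h
  | wedge X1 X2 ih1 ih2 =>
    intro Z1 Z2 n _ h1 h2
    have hZ : (L1.wedge Z1 Z2) ≠ L1.box := by simp
    have hZW := WF_norm _ hZ
    have hZs : (nf (L1.wedge Z1 Z2)).size = Z1.leaves + Z2.leaves := by
      rw [size_norm _ hZ]; rfl
    have pz1 := Z1.leaves_pos_s4
    have pz2 := Z2.leaves_pos_s4
    cases X1 with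
    | box =>
      cases X2 with
      | box =>
        simp only [L1.leaves] at h2
        interval_cases n
        · rw [L1.wedge_ins_le _ _ (by simp [L1.leaves]), L1.ins_box]
          rw [nf_bb, nf_wb]
          exact I2.refl _ ⟨trivial, hZW, le_refl 1, by simp [T2.size]⟩
        · rw [L1.wedge_ins_gt _ _ (by simp [L1.leaves]), L1.ins_box]
          rw [nf_bb, nf_bw]
          exact I2.refl _ ⟨trivial, hZW, by omega, by simp [T2.size]⟩
      | wedge y1 y2 =>
        have hY : (L1.wedge y1 y2) ≠ L1.box := by simp
        have hYW := WF_norm _ hY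
        have hYs : (nf (L1.wedge y1 y2)).size = y1.leaves + y2.leaves := by
          rw [size_norm _ hY]; rfl
        have py1 := y1.leaves_pos_s4
        have py2 := y2.leaves_pos_s4
        simp only [L1.leaves] at h2
        rw [nf_bw]
        rcases Nat.lt_or_ge n 2 with hn | hn
        · -- n = 1
          have hn1 : n = 1 := by omega
          subst hn1
          rw [L1.wedge_ins_le _ _ (by simp [L1.leaves]), L1.ins_box, nf_ww]
          exact I2.refl _ ⟨⟨trivial, hYW, by omega, by simp [T2.size]⟩, hZW, le_refl 1,
            by simp only [T2.size]; omega⟩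
        · -- n ≥ 2
          rw [L1.wedge_ins_gt _ _ (by simp [L1.leaves]; omega)]
          have hsub : n - L1.box.leaves = n - 1 := rfl
          rw [hsub]
          obtain ⟨w1, w2, hw⟩ := L1.ins_shape y1 y2 (n - 1) (L1.wedge Z1 Z2)
          have hWne : (L1.wedge y1 y2).ins (n - 1) (L1.wedge Z1 Z2) ≠ L1.box := by
            rw [hw]; simp
          have hrhs : nf (L1.wedge L1.box ((L1.wedge y1 y2).ins (n - 1) (L1.wedge Z1 Z2)))
              = T2.two.ins 2 (nf ((L1.wedge y1 y2).ins (n - 1) (L1.wedge Z1 Z2))) := by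
            rw [hw, nf_bw]
          rw [hrhs]
          have wfL : ((T2.two.ins 2 (nf (L1.wedge y1 y2))).ins n (nf (L1.wedge Z1 Z2))).WF :=
            ⟨⟨trivial, hYW, by omega, by simp [T2.size]⟩, hZW, by omega,
              by simp only [T2.size, hYs]; omega⟩
          have step1 := I2.assoc1 (A := T2.two) (B := nf (L1.wedge y1 y2))
            (C := nf (L1.wedge Z1 Z2)) (n := 2) (m := n) wfL (by omega)
            (by rw [hYs]; omega)
          have hidx : n - 2 + 1 = n - 1 := by omega
          rw [hidx] at step1
          refine I2.trans step1 (I2.congr (I2.refl T2.two trivial)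
            (ih2 Z1 Z2 (n - 1) hY (by omega) (by simp [L1.leaves]; omega)) ?_ ?_)
          · exact ⟨trivial, ⟨hYW, hZW, by omega, by rw [hYs]; omega⟩, by omega,
              by simp [T2.size]⟩
          · exact ⟨trivial, WF_norm _ hWne, by omega, by simp [T2.size]⟩
    | wedge x1 x2 =>
      have hW : (L1.wedge x1 x2) ≠ L1.box := by simp
      have hWW := WF_norm _ hW
      have hWs : (nf (L1.wedge x1 x2)).size = x1.leaves + x2.leaves := by
        rw [size_norm _ hW]; rfl
      have hWl : (L1.wedge x1 x2).leaves = x1.leaves + x2.leaves := rfl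
      have px1 := x1.leaves_pos_s4
      have px2 := x2.leaves_pos_s4
      cases X2 with
      | box =>
        simp only [L1.leaves] at h2
        rw [nf_wb]
        rcases le_or_gt n (L1.wedge x1 x2).leaves with hn | hn
        · -- n ≤ |W|
          rw [L1.wedge_ins_le _ _ hn]
          obtain ⟨w1, w2, hw⟩ := L1.ins_shape x1 x2 n (L1.wedge Z1 Z2)
          have hWne : (L1.wedge x1 x2).ins n (L1.wedge Z1 Z2) ≠ L1.box := by rw [hw]; simp
          have hrhs : nf (L1.wedge ((L1.wedge x1 x2).ins n (L1.wedge Z1 Z2)) L1.box)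
              = T2.two.ins 1 (nf ((L1.wedge x1 x2).ins n (L1.wedge Z1 Z2))) := by
            rw [hw, nf_wb]
          rw [hrhs]
          have wfL : ((T2.two.ins 1 (nf (L1.wedge x1 x2))).ins n (nf (L1.wedge Z1 Z2))).WF :=
            ⟨⟨trivial, hWW, le_refl 1, by simp [T2.size]⟩, hZW, by omega,
              by simp only [T2.size, hWs]; omega⟩
          have step1 := I2.assoc1 (A := T2.two) (B := nf (L1.wedge x1 x2))
            (C := nf (L1.wedge Z1 Z2)) (n := 1) (m := n) wfL (by omega)
            (by rw [hWs]; omega)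
          have hidx : n - 1 + 1 = n := by omega
          rw [hidx] at step1
          refine I2.trans step1 (I2.congr (I2.refl T2.two trivial)
            (ih1 Z1 Z2 n hW (by omega) hn) ?_ ?_)
          · exact ⟨trivial, ⟨hWW, hZW, by omega, by rw [hWs]; omega⟩, by omega,
              by simp [T2.size]⟩
          · exact ⟨trivial, WF_norm _ hWne, by omega, by simp [T2.size]⟩
        · -- n = |W| + 1
          rw [L1.wedge_ins_gt _ _ hn, L1.ins_box, nf_ww]
          have wfL : ((T2.two.ins 1 (nf (L1.wedge x1 x2))).ins n (nf (L1.wedge Z1 Z2))).WF :=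
            ⟨⟨trivial, hWW, le_refl 1, by simp [T2.size]⟩, hZW, by omega,
              by simp only [T2.size, hWs]; omega⟩
          have step := I2.assoc2 (A := T2.two) (B := nf (L1.wedge x1 x2))
            (C := nf (L1.wedge Z1 Z2)) (n := 1) (m := n) wfL (by rw [hWs]; omega)
          have hidx : n - (nf (L1.wedge x1 x2)).size + 1 = 2 := by rw [hWs]; omega
          rw [hidx] at step
          exact step
      | wedge y1 y2 =>
        have hY : (L1.wedge y1 y2) ≠ L1.box := by simp
        have hYW := WF_norm _ hY
        have hYs : (nf (L1.wedge y1 y2)).size = y1.leaves + y2.leaves := by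
          rw [size_norm _ hY]; rfl
        have py1 := y1.leaves_pos_s4
        have py2 := y2.leaves_pos_s4
        simp only [L1.leaves] at h2
        rw [nf_ww]
        have wfA : (T2.two.ins 2 (nf (L1.wedge y1 y2))).WF :=
          ⟨trivial, hYW, by omega, by simp [T2.size]⟩
        have hsA : (T2.two.ins 2 (nf (L1.wedge y1 y2))).size = 1 + (y1.leaves + y2.leaves) := by
          simp only [T2.size, hYs]; omega
        have wfL : (((T2.two.ins 2 (nf (L1.wedge y1 y2))).ins 1 (nf (L1.wedge x1 x2))).ins n
            (nf (L1.wedge Z1 Z2))).WF :=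
          ⟨⟨wfA, hWW, le_refl 1, by rw [hsA]; omega⟩, hZW, by omega,
            by simp only [T2.size, hsA, hWs]; omega⟩
        rcases le_or_gt n (L1.wedge x1 x2).leaves with hn | hn
        · -- n ≤ |W|
          rw [L1.wedge_ins_le _ _ hn]
          obtain ⟨w1, w2, hw⟩ := L1.ins_shape x1 x2 n (L1.wedge Z1 Z2)
          have hWne : (L1.wedge x1 x2).ins n (L1.wedge Z1 Z2) ≠ L1.box := by rw [hw]; simp
          have hrhs : nf (L1.wedge ((L1.wedge x1 x2).ins n (L1.wedge Z1 Z2)) (L1.wedge y1 y2))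
              = (T2.two.ins 2 (nf (L1.wedge y1 y2))).ins 1
                  (nf ((L1.wedge x1 x2).ins n (L1.wedge Z1 Z2))) := by
            rw [hw, nf_ww]
          rw [hrhs]
          have step1 := I2.assoc1 (A := T2.two.ins 2 (nf (L1.wedge y1 y2)))
            (B := nf (L1.wedge x1 x2)) (C := nf (L1.wedge Z1 Z2)) (n := 1) (m := n)
            wfL (by omega) (by rw [hWs]; omega)
          have hidx : n - 1 + 1 = n := by omega
          rw [hidx] at step1
          refine I2.trans step1 (I2.congr (I2.refl _ wfA)
            (ih1 Z1 Z2 n hW (by omega) hn) ?_ ?_)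
          · exact ⟨wfA, ⟨hWW, hZW, by omega, by rw [hWs]; omega⟩, by omega,
              by rw [hsA]; omega⟩
          · exact ⟨wfA, WF_norm _ hWne, by omega, by rw [hsA]; omega⟩
        · -- n > |W|
          rw [L1.wedge_ins_gt _ _ hn]
          rw [hWl] at hn ⊢
          obtain ⟨w1, w2, hw⟩ :=
            L1.ins_shape y1 y2 (n - (x1.leaves + x2.leaves)) (L1.wedge Z1 Z2)
          have hYne : (L1.wedge y1 y2).ins (n - (x1.leaves + x2.leaves)) (L1.wedge Z1 Z2)
              ≠ L1.box := by rw [hw]; simp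
          have hrhs : nf (L1.wedge (L1.wedge x1 x2)
                ((L1.wedge y1 y2).ins (n - (x1.leaves + x2.leaves)) (L1.wedge Z1 Z2)))
              = (T2.two.ins 2
                  (nf ((L1.wedge y1 y2).ins (n - (x1.leaves + x2.leaves)) (L1.wedge Z1 Z2)))).ins 1
                  (nf (L1.wedge x1 x2)) := by
            rw [hw, nf_ww]
          rw [hrhs]
          have step1 := I2.assoc2 (A := T2.two.ins 2 (nf (L1.wedge y1 y2)))
            (B := nf (L1.wedge x1 x2)) (C := nf (L1.wedge Z1 Z2)) (n := 1) (m := n)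
            wfL (by rw [hWs]; omega)
          have hidx1 : n - (nf (L1.wedge x1 x2)).size + 1 = n - (x1.leaves + x2.leaves) + 1 := by
            rw [hWs]
          rw [hidx1] at step1
          have wfI : ((T2.two.ins 2 (nf (L1.wedge y1 y2))).ins
              (n - (x1.leaves + x2.leaves) + 1) (nf (L1.wedge Z1 Z2))).WF :=
            ⟨wfA, hZW, by omega, by rw [hsA]; omega⟩
          have step2 := I2.assoc1 (A := T2.two) (B := nf (L1.wedge y1 y2))
            (C := nf (L1.wedge Z1 Z2)) (n := 2) (m := n - (x1.leaves + x2.leaves) + 1)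
            wfI (by omega) (by rw [hYs]; omega)
          have hidx2 : n - (x1.leaves + x2.leaves) + 1 - 2 + 1 = n - (x1.leaves + x2.leaves) := by
            omega
          rw [hidx2] at step2
          have wfI2 : (T2.two.ins 2
              ((nf (L1.wedge y1 y2)).ins (n - (x1.leaves + x2.leaves))
                (nf (L1.wedge Z1 Z2)))).WF :=
            ⟨trivial, ⟨hYW, hZW, by omega, by rw [hYs]; omega⟩, by omega, by simp [T2.size]⟩
          have step3 := ih2 Z1 Z2 (n - (x1.leaves + x2.leaves)) hY (by omega)
            (by simp [L1.leaves]; omega)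
          have wfI3 : (T2.two.ins 2
              (nf ((L1.wedge y1 y2).ins (n - (x1.leaves + x2.leaves)) (L1.wedge Z1 Z2)))).WF :=
            ⟨trivial, WF_norm _ hYne, by omega, by simp [T2.size]⟩
          have hsz3 : (nf ((L1.wedge y1 y2).ins (n - (x1.leaves + x2.leaves))
              (L1.wedge Z1 Z2))).size
              = y1.leaves + y2.leaves + (Z1.leaves + Z2.leaves) - 1 := by
            rw [size_norm _ hYne, L1.leaves_ins_s4 _ _ _ (by simp [L1.leaves]; omega)]; rfl
          refine I2.trans step1 (I2.trans
            (I2.congr step2 (I2.refl _ hWW) ?_ ?_)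
            (I2.congr (I2.congr (I2.refl T2.two trivial) step3 wfI2 wfI3)
              (I2.refl _ hWW) ?_ ?_))
          · exact ⟨wfI, hWW, le_refl 1, by simp only [T2.size, hsA, hZs]; omega⟩
          · exact ⟨wfI2, hWW, le_refl 1, by simp only [T2.size, hYs, hZs]; omega⟩
          · exact ⟨wfI2, hWW, le_refl 1, by simp only [T2.size, hYs, hZs]; omega⟩
          · exact ⟨wfI3, hWW, le_refl 1, by simp only [T2.size, hsz3]; omega⟩

theorem toNF : ∀ A : T2, A.WF → I2 A (nf A.val) := by
  intro A
  induction A with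
  | two => intro _; exact I2.refl _ trivial
  | ins A n B ihA ihB =>
    rintro ⟨hA, hB, h1, h2⟩
    obtain ⟨a1, a2, ha⟩ := val_shape A
    obtain ⟨b1, b2, hb⟩ := val_shape B
    have hAne : A.val ≠ L1.box := by rw [ha]; simp
    have hBne : B.val ≠ L1.box := by rw [hb]; simp
    have hsz : A.val.leaves = A.size := size_val A hA
    have step1 : I2 (A.ins n B) ((nf A.val).ins n (nf B.val)) := by
      refine I2.congr (ihA hA) (ihB hB) ⟨hA, hB, h1, h2⟩ ?_
      exact ⟨WF_norm _ hAne, WF_norm _ hBne, h1, by rw [size_norm _ hAne, hsz]; exact h2⟩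
    have step2 : I2 ((nf A.val).ins n (nf B.val)) (nf (A.val.ins n B.val)) := by
      rw [hb]
      exact key A.val b1 b2 n hAne h1 (by omega)
    exact I2.trans step1 step2

theorem completeness_I2 {A B : T2} (hA : A.WF) (hB : B.WF)
    (h : A.val = B.val) : I2 A B := by
  exact I2.trans (toNF A hA) (h ▸ (toNF B hB)).symm
end

section
/- (Auxiliary Lemma) If A and B are normal members of L'' and v(A) = v(B), then A and B coincide (are identical terms). -/
/-- A term of `L''` is *normal* when it has no subterm of the form
`(X ◁ₙ Y) ◁ₘ Z` with `n ≤ m`. -/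
def T2.Normal : T2 → Prop
  | T2.two => True
  | T2.ins A m B => A.Normal ∧ B.Normal ∧ ∀ (X : T2) (n : ℕ) (Y : T2), A = T2.ins X n Y → m < n

lemma T2.val_isWedge (A : T2) : ∃ L R, A.val = L1.wedge L R := by
  cases A with
  | two => exact ⟨_, _, rfl⟩
  | ins X n Y =>
    obtain ⟨L, R, h⟩ := T2.val_isWedge X
    simp only [T2.val, h, L1.ins]
    split <;> exact ⟨_, _, rfl⟩

lemma T2.val_ne_box (A : T2) : A.val ≠ L1.box := by
  obtain ⟨L, R, h⟩ := A.val_isWedge; simp [h]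

lemma T2.two_le_size (A : T2) : 2 ≤ A.size := by
  induction A with
  | two => simp [T2.size]
  | ins X n Y ihX ihY => simp [T2.size]; omega

/-- Structure of normal well-formed terms. -/
lemma T2.struct (A : T2) (hW : A.WF) (hN : A.Normal) :
    A = T2.two ∨
    (∃ B, A = T2.ins T2.two 1 B ∧ B.WF ∧ B.Normal) ∨
    (∃ C, A = T2.ins T2.two 2 C ∧ C.WF ∧ C.Normal) ∨
    (∃ B C, A = T2.ins (T2.ins T2.two 2 C) 1 B ∧ B.WF ∧ B.Normal ∧ C.WF ∧ C.Normal) := by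
  induction A with
  | two => exact Or.inl rfl
  | ins X m Y ihX ihY =>
    obtain ⟨hXW, hYW, hm1, hm2⟩ := hW
    obtain ⟨hXN, hYN, hcond⟩ := hN
    rcases ihX hXW hXN with h | ⟨B, h, _, _⟩ | ⟨C, h, hCW, hCN⟩ | ⟨B, C, h, _, _, _, _⟩
    · subst h
      have : m = 1 ∨ m = 2 := by simp [T2.size] at hm2; omega
      rcases this with rfl | rfl
      · exact Or.inr (Or.inl ⟨Y, rfl, hYW, hYN⟩)
      · exact Or.inr (Or.inr (Or.inl ⟨Y, rfl, hYW, hYN⟩))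
    · -- X = ins two 1 B : contradiction, m < 1
      have := hcond _ _ _ h; omega
    · -- X = ins two 2 C : m < 2 so m = 1
      have hm := hcond _ _ _ h
      have : m = 1 := by omega
      subst this; subst h
      exact Or.inr (Or.inr (Or.inr ⟨Y, C, rfl, hYW, hYN, hCW, hCN⟩))
    · -- X = ins (ins two 2 C) 1 B : then X normal forces 1 < 2 fine, but m < 1
      have := hcond _ _ _ h; omega

lemma T2.val0 : T2.two.val = L1.wedge L1.box L1.box := rfl

lemma T2.val1 (B : T2) : (T2.ins T2.two 1 B).val = L1.wedge B.val L1.box := by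
  simp [T2.val, L1.ins, L1.leaves]

lemma T2.val2 (C : T2) : (T2.ins T2.two 2 C).val = L1.wedge L1.box C.val := by
  simp [T2.val, L1.ins, L1.leaves]

lemma T2.val3 (B C : T2) :
    (T2.ins (T2.ins T2.two 2 C) 1 B).val = L1.wedge B.val C.val := by
  simp [T2.val, L1.ins, L1.leaves]

lemma aux_main : ∀ k (A B : T2), A.size ≤ k → A.WF → B.WF →
    A.Normal → B.Normal → A.val = B.val → A = B := by
  intro k
  induction k with
  | zero => intro A B h; have := A.two_le_size; omega
  | succ k ih =>
    intro A B hk hA hB hAn hBn h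
    rcases A.struct hA hAn with hA' | ⟨P, hA', hPW, hPN⟩ | ⟨Q, hA', hQW, hQN⟩ |
        ⟨P, Q, hA', hPW, hPN, hQW, hQN⟩ <;>
      rcases B.struct hB hBn with hB' | ⟨P', hB', hPW', hPN'⟩ | ⟨Q', hB', hQW', hQN'⟩ |
        ⟨P', Q', hB', hPW', hPN', hQW', hQN'⟩ <;>
      subst hA' <;> subst hB' <;>
      simp only [T2.val0, T2.val1, T2.val2, T2.val3, L1.wedge.injEq] at h <;>
      first
        | rfl
        | exact absurd h.1 (T2.val_ne_box _)
        | exact absurd h.1.symm (T2.val_ne_box _)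
        | exact absurd h.2 (T2.val_ne_box _)
        | exact absurd h.2.symm (T2.val_ne_box _)
        | skip
    · have hs : P.size ≤ k := by
        have := P.two_le_size; simp [T2.size] at hk; omega
      rw [ih P P' hs hPW hPW' hPN hPN' h.1]
    · have hs : Q.size ≤ k := by
        have := Q.two_le_size; simp [T2.size] at hk; omega
      rw [ih Q Q' hs hQW hQW' hQN hQN' h.2]
    · have hsP : P.size ≤ k := by
        have := P.two_le_size; have := Q.two_le_size
        simp [T2.size] at hk; omega
      have hsQ : Q.size ≤ k := by
        have := P.two_le_size; have := Q.two_le_size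
        simp [T2.size] at hk; omega
      rw [ih P P' hsP hPW hPW' hPN hPN' h.1, ih Q Q' hsQ hQW hQW' hQN hQN' h.2]

theorem auxiliary_lemma {A B : T2} (hA : A.WF) (hB : B.WF)
    (hAn : A.Normal) (hBn : B.Normal) (h : A.val = B.val) : A = B :=
  aux_main A.size A B le_rfl hA hB hAn hBn h
end

section
/- (Normal type classification) Every normal member of L'' is of exactly one of the following four forms: (2◁₂A₂)◁₁A₁, or 2◁₂A₂, or 2◁₁A₁, or 2, where A₁ and A₂ are themselves normal members of L''. -/
theorem normal_classification (A : T2) (hWF : A.WF) (hN : A.Normal) :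
    (∃ A₁ A₂ : T2, A₁.WF ∧ A₁.Normal ∧ A₂.WF ∧ A₂.Normal ∧
        A = (T2.two.ins 2 A₂).ins 1 A₁) ∨
    (∃ A₂ : T2, A₂.WF ∧ A₂.Normal ∧ A = T2.two.ins 2 A₂) ∨
    (∃ A₁ : T2, A₁.WF ∧ A₁.Normal ∧ A = T2.two.ins 1 A₁) ∨
    A = T2.two := by
  induction A with
  | two => exact Or.inr (Or.inr (Or.inr rfl))
  | ins B n C ihB ihC =>
    obtain ⟨hBW, hCW, hn1, hn2⟩ := hWF
    obtain ⟨hBN, hCN, hlt⟩ := hN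
    rcases ihB hBW hBN with ⟨A₁, A₂, _, _, _, _, hB⟩ | ⟨A₂, hW₂, hN₂, hB⟩ | ⟨A₁, _, _, hB⟩ | hB
    · exact absurd (hlt _ _ _ hB) (by omega)
    · have h1 : n < 2 := hlt _ _ _ hB
      have : n = 1 := by omega
      subst this hB
      exact Or.inl ⟨C, A₂, hCW, hCN, hW₂, hN₂, rfl⟩
    · exact absurd (hlt _ _ _ hB) (by omega)
    · subst hB
      simp [T2.size] at hn2
      interval_cases n
      · exact Or.inr (Or.inr (Or.inl ⟨C, hCW, hCN, rfl⟩))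
      · exact Or.inr (Or.inl ⟨C, hCW, hCN, rfl⟩)
end

section
/- (Measure decrease) Define c : L'' → ℕ by c(2) = 2 and c(B◁ₙC) = c(B)·(c(C)+1); let s(A) be the sum of the indices n of all occurrences of ◁ₙ in A, and let d(A) = c(A) + s(A). Then for every instance of (assoc 1), i.e. A = (P◁ₙQ)◁ₘR with n ≤ m < n+|Q| and B = P◁ₙ(Q◁_{m−n+1}R), and for every instance of (assoc 2), i.e. A = (P◁ₙQ)◁ₘR with n+|Q| ≤ m and B = (P◁_{m−|Q|+1}R)◁ₙQ, one has d(A) > d(B). -/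
namespace T2

/-- `c(2) = 2` and `c(B ◁ₙ C) = c(B)·(c(C)+1)`. -/
def c : T2 → ℕ
  | two => 2
  | ins A _ B => A.c * (B.c + 1)

/-- `s(A)`: the sum of the indices `n` of all occurrences of `◁ₙ` in `A`. -/
def s : T2 → ℕ
  | two => 0
  | ins A n B => A.s + n + B.s

/-- `d(A) = c(A) + s(A)`. -/
def d (A : T2) : ℕ := A.c + A.s

lemma c_pos (A : T2) : 1 ≤ A.c := by
  induction A with
  | two => norm_num [c]
  | ins A n B ihA ihB =>
    simp only [c]
    exact Nat.one_le_iff_ne_zero.mpr (by positivity)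

lemma two_le_size_s9 (A : T2) : 2 ≤ A.size := by
  induction A with
  | two => norm_num [size]
  | ins A n B ihA ihB => simp only [size]; omega

end T2

theorem measure_decrease :
    (∀ (P Q R : T2) (n m : ℕ), ((P.ins n Q).ins m R).WF → n ≤ m → m < n + Q.size →
        ((P.ins n Q).ins m R).d > (P.ins n (Q.ins (m - n + 1) R)).d) ∧
    (∀ (P Q R : T2) (n m : ℕ), ((P.ins n Q).ins m R).WF → n + Q.size ≤ m →
        ((P.ins n Q).ins m R).d > ((P.ins (m - Q.size + 1) R).ins n Q).d) := by
  constructor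
  · intro P Q R n m hwf hnm hm
    obtain ⟨⟨hP, hQ, hn1, hn2⟩, hR, hm1, hm2⟩ := hwf
    have hP1 := P.c_pos
    have hR1 := R.c_pos
    simp only [T2.d, T2.c, T2.s]
    have key : P.c * (Q.c + 1) * (R.c + 1) =
        P.c * (Q.c * (R.c + 1) + 1) + P.c * R.c := by ring
    have hPR : 1 ≤ P.c * R.c := Nat.one_le_iff_ne_zero.mpr (by positivity)
    omega
  · intro P Q R n m hwf hm
    obtain ⟨⟨hP, hQ, hn1, hn2⟩, hR, hm1, hm2⟩ := hwf
    have hQS := Q.two_le_size_s9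
    simp only [T2.d, T2.c, T2.s]
    have key : P.c * (Q.c + 1) * (R.c + 1) =
        P.c * (R.c + 1) * (Q.c + 1) := by ring
    omega
end

section
/- (Decomposition of the pentagon) In the category Γ, with 2 = □∧□, the following equation holds: (γ→_{2,2}◁₁1_2) ∘ (γ→_{2,2}◁₃1_2) = (1_2◁₁γ→_{2,2}) ∘ (γ→_{2,2}◁₂1_2) ∘ (1_2◁₂γ→_{2,2}). -/
/-- `2 = □∧□`. -/
def L1.two : L1 := L1.wedge L1.box L1.box

/-- Arrow terms of the category `Γ`: generated by identities `1_A`,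
`γ→_{A,B}`, `γ←_{A,B}`, composition and the operations `◁ₙ`. -/
inductive G : Type
  | id : L1 → G
  | gam : L1 → L1 → G
  | gaminv : L1 → L1 → G
  | comp : G → G → G
  | ins : G → ℕ → G → G

namespace G

/-- The source of an arrow term (`comp g f` stands for `g ∘ f`). -/
def src : G → L1
  | id A => A
  | gam A B => A.ins A.leaves B
  | gaminv A B => B.ins 1 A
  | comp _ f => f.src
  | ins f n g => (f.src).ins n (g.src)

/-- The target of an arrow term. -/
def tgt : G → L1
  | id A => A
  | gam A B => B.ins 1 A
  | gaminv A B => A.ins A.leaves B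
  | comp g _ => g.tgt
  | ins f n g => (f.tgt).ins n (g.tgt)

/-- Well-formedness of arrow terms: `g ∘ f` requires `tgt f = src g`, and
`f ◁ₙ g` for `f : A → B` requires `1 ≤ n`, `n ≤ |A|` and `n ≤ |B|`. -/
def WF : G → Prop
  | id _ => True
  | gam _ _ => True
  | gaminv _ _ => True
  | comp g f => g.WF ∧ f.WF ∧ f.tgt = g.src
  | ins f n g => f.WF ∧ g.WF ∧ 1 ≤ n ∧ n ≤ f.src.leaves ∧ n ≤ f.tgt.leaves

end G

/-- The congruence on arrow terms of `Γ` generated by the equations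
(cat 1), (cat 2), (bif 1), (bif 2), (assoc 1→), (assoc 2→), (unit→),
(γ nat), (γγ), (γ1), (hex 1), (hex 1a), (hex 2), (hex 2a). -/
inductive GEq : G → G → Prop
  | refl (f : G) (h : f.WF) : GEq f f
  | symm {f g : G} : GEq f g → GEq g f
  | trans {f g h : G} : GEq f g → GEq g h → GEq f h
  | compCongr {f₁ f₂ g₁ g₂ : G} : GEq f₁ g₁ → GEq f₂ g₂ →
      (G.comp f₁ f₂).WF → (G.comp g₁ g₂).WF →
      GEq (G.comp f₁ f₂) (G.comp g₁ g₂)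
  | insCongr {f g h j : G} {n : ℕ} : GEq f g → GEq h j →
      (G.ins f n h).WF → (G.ins g n j).WF →
      GEq (G.ins f n h) (G.ins g n j)
  | cat1l (f : G) (h : f.WF) : GEq (G.comp (G.id f.tgt) f) f
  | cat1r (f : G) (h : f.WF) : GEq (G.comp f (G.id f.src)) f
  | cat2 (f g h : G) (hw : (G.comp h (G.comp g f)).WF) :
      GEq (G.comp (G.comp h g) f) (G.comp h (G.comp g f))
  | bif1 (A B : L1) (n : ℕ) (h1 : 1 ≤ n) (h2 : n ≤ A.leaves) :
      GEq (G.ins (G.id A) n (G.id B)) (G.id (A.ins n B))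
  | bif2 (f₁ f₂ g₁ g₂ : G) (n : ℕ)
      (hw : (G.ins (G.comp f₂ f₁) n (G.comp g₂ g₁)).WF) :
      GEq (G.ins (G.comp f₂ f₁) n (G.comp g₂ g₁))
          (G.comp (G.ins f₂ n g₂) (G.ins f₁ n g₁))
  | assoc1 (f g h : G) (n m : ℕ)
      (hw : (G.ins (G.ins f n g) m h).WF) (h3 : n ≤ m) (h4 : m < n + g.src.leaves) :
      GEq (G.ins (G.ins f n g) m h) (G.ins f n (G.ins g (m - n + 1) h))
  | assoc2 (f g h : G) (n m : ℕ)
      (hw : (G.ins (G.ins f n g) m h).WF) (h3 : n + g.src.leaves ≤ m) :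
      GEq (G.ins (G.ins f n g) m h) (G.ins (G.ins f (m - g.src.leaves + 1) h) n g)
  | unitl (f : G) (h : f.WF) : GEq (G.ins (G.id L1.box) 1 f) f
  | unitr (f : G) (n : ℕ) (h : f.WF) (h1 : 1 ≤ n)
      (h2 : n ≤ f.src.leaves) (h3 : n ≤ f.tgt.leaves) :
      GEq (G.ins f n (G.id L1.box)) f
  | gnat (f g : G) (hf : f.WF) (hg : g.WF) :
      GEq (G.comp (G.gam f.tgt g.tgt) (G.ins f f.src.leaves g))
          (G.comp (G.ins g 1 f) (G.gam f.src g.src))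
  | gg1 (A B : L1) : GEq (G.comp (G.gaminv A B) (G.gam A B)) (G.id (A.ins A.leaves B))
  | gg2 (A B : L1) : GEq (G.comp (G.gam A B) (G.gaminv A B)) (G.id (B.ins 1 A))
  | gam1l (A : L1) : GEq (G.gam L1.box A) (G.id A)
  | gam1r (A : L1) : GEq (G.gam A L1.box) (G.id A)
  | hex1 (A B C : L1) :
      GEq (G.gam (A.ins A.leaves B) C)
          (G.comp (G.ins (G.gam A C) A.leaves (G.id B))
                  (G.ins (G.id A) A.leaves (G.gam B C)))
  | hex1a (A B C : L1) (n : ℕ) (h1 : 1 ≤ n) (h2 : n < A.leaves) :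
      GEq (G.gam (A.ins n B) C) (G.ins (G.gam A C) n (G.id B))
  | hex2 (A B C : L1) :
      GEq (G.gam C (A.ins 1 B))
          (G.comp (G.ins (G.id A) 1 (G.gam C B))
                  (G.ins (G.gam C A) C.leaves (G.id B)))
  | hex2a (A B C : L1) (n : ℕ) (h1 : 1 < n) (h2 : n ≤ A.leaves) :
      GEq (G.gam C (A.ins n B)) (G.ins (G.gam C A) (n + C.leaves - 1) (G.id B))

namespace G

/-- The defined associativity arrow
`b→_{A,B,C} = ((γ→_{2,2} ◁₃ 1_C) ◁₂ 1_B) ◁₁ 1_A : A∧(B∧C) → (A∧B)∧C`. -/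
def bto (A B C : L1) : G :=
  G.ins (G.ins (G.ins (G.gam L1.two L1.two) 3 (G.id C)) 2 (G.id B)) 1 (G.id A)

/-- The defined arrow
`b←_{A,B,C} = ((γ←_{2,2} ◁₃ 1_C) ◁₂ 1_B) ◁₁ 1_A : (A∧B)∧C → A∧(B∧C)`. -/
def bfrom (A B C : L1) : G :=
  G.ins (G.ins (G.ins (G.gaminv L1.two L1.two) 3 (G.id C)) 2 (G.id B)) 1 (G.id A)

/-- The defined operation on arrows `f ∧ g = (1_2 ◁₂ g) ◁₁ f`. -/
def wdg (f g : G) : G := G.ins (G.ins (G.id L1.two) 2 g) 1 f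

end G

theorem pentagon_core :
    GEq (G.comp (G.ins (G.gam L1.two L1.two) 1 (G.id L1.two))
                (G.ins (G.gam L1.two L1.two) 3 (G.id L1.two)))
        (G.comp (G.ins (G.id L1.two) 1 (G.gam L1.two L1.two))
          (G.comp (G.ins (G.gam L1.two L1.two) 2 (G.id L1.two))
                  (G.ins (G.id L1.two) 2 (G.gam L1.two L1.two)))) := by

  have wf2 : (G.id L1.two).WF := trivial
  have wfg : (G.gam L1.two L1.two).WF := trivial
  have wfi3 : (G.ins (G.gam L1.two L1.two) 3 (G.id L1.two)).WF :=
    ⟨trivial, trivial, by norm_num, by decide, by decide⟩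
  have wfi1 : (G.ins (G.gam L1.two L1.two) 1 (G.id L1.two)).WF :=
    ⟨trivial, trivial, by norm_num, by decide, by decide⟩
  have wfi2 : (G.ins (G.gam L1.two L1.two) 2 (G.id L1.two)).WF :=
    ⟨trivial, trivial, by norm_num, by decide, by decide⟩
  have wfj1 : (G.ins (G.id L1.two) 1 (G.gam L1.two L1.two)).WF :=
    ⟨trivial, trivial, by norm_num, by decide, by decide⟩
  have wfj2 : (G.ins (G.id L1.two) 2 (G.gam L1.two L1.two)).WF :=
    ⟨trivial, trivial, by norm_num, by decide, by decide⟩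
  have h1 : GEq (G.ins (G.gam L1.two L1.two) 1 (G.id L1.two))
      (G.gam (L1.two.ins 1 L1.two) L1.two) :=
    (GEq.hex1a L1.two L1.two L1.two 1 le_rfl (by decide)).symm
  have step1 := GEq.compCongr h1 (GEq.refl _ wfi3)
    ⟨wfi1, wfi3, by decide⟩ ⟨trivial, wfi3, by decide⟩
  have h2 := GEq.gnat (G.gam L1.two L1.two) (G.id L1.two) trivial trivial
  have h3 := GEq.hex1 L1.two L1.two L1.two
  have step3 := GEq.compCongr (GEq.refl (G.ins (G.id L1.two) 1 (G.gam L1.two L1.two)) wfj1) h3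
    ⟨wfj1, trivial, by decide⟩
    ⟨wfj1, ⟨wfi2, wfj2, by decide⟩, by decide⟩
  exact step1.trans (h2.trans step3)
end
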